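/- arXiv:2109.01352 — 4 statements merged into one kernel-verified Lean document; each statement's English description precedes it below -/
import Mathlib

section
/- Let A ⊆ [0,1] and Y : [0,1] → ℕ be injective on A. Then the function f : [0,1] → ℝ defined by f(x) = 2^{−(Y(x)+1)} if x ∈ A and f(x) = 0 otherwise has bounded variation on [0,1], with total variation at most 2. -/
open Set Finset

lemma geom_tail_le_one (T : Finset ℕ) : ∑ k ∈ T, (2:ℝ) ^ (-(k + 1 : ℤ)) ≤ 1 := by
  have hsub : T ⊆ Finset.range (T.sup id + 1) := by
    intro k hk
    simp only [Finset.mem_range]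
    exact Nat.lt_succ_of_le (Finset.le_sup (f := id) hk)
  have h1 : ∑ k ∈ T, (2:ℝ) ^ (-(k + 1 : ℤ)) ≤
      ∑ k ∈ Finset.range (T.sup id + 1), (2:ℝ) ^ (-(k + 1 : ℤ)) := by
    apply Finset.sum_le_sum_of_subset_of_nonneg hsub
    intro i _ _
    positivity
  refine h1.trans ?_
  have heq : ∀ k : ℕ, (2:ℝ) ^ (-(k + 1 : ℤ)) = (1/2:ℝ) * (1/2:ℝ)^k := by
    intro k
    rw [zpow_neg]
    rw [show ((k:ℤ) + 1) = ((k+1 : ℕ) : ℤ) by push_cast; ring, zpow_natCast]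
    rw [pow_succ]
    field_simp
    rw [← mul_pow]; norm_num
  calc ∑ k ∈ Finset.range (T.sup id + 1), (2:ℝ) ^ (-(k + 1 : ℤ))
      = (1/2:ℝ) * ∑ k ∈ Finset.range (T.sup id + 1), (1/2:ℝ)^k := by
        rw [Finset.mul_sum]; exact Finset.sum_congr rfl fun k _ => heq k
    _ ≤ (1/2:ℝ) * 2 := by
        have := sum_geometric_two_le (T.sup id + 1)
        nlinarith
    _ = 1 := by norm_num

theorem injective_indicator_bounded_variation
    (A : Set ℝ) (hA : A ⊆ Icc (0:ℝ) 1)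
    (Y : ℝ → ℕ) (hY : ∀ x ∈ A, ∀ y ∈ A, Y x = Y y → x = y)
    (f : ℝ → ℝ)
    (hf : ∀ x, (x ∈ A → f x = (2:ℝ) ^ (-(Y x + 1 : ℤ))) ∧ (x ∉ A → f x = 0)) :
    ∀ (n : ℕ) (x : ℕ → ℝ), x 0 = 0 → x n = 1 →
      (∀ i < n, x i < x (i + 1)) →
      ∑ i ∈ Finset.range n, |f (x (i + 1)) - f (x i)| ≤ 2 := by
  intro n x hx0 hxn hmono
  classical
  -- f is nonnegative
  have hfnn : ∀ t, 0 ≤ f t := by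
    intro t
    by_cases ht : t ∈ A
    · rw [(hf t).1 ht]; positivity
    · rw [(hf t).2 ht]
  -- x is strictly increasing up to n
  have hlt : ∀ i j, i < j → j ≤ n → x i < x j := by
    intro i j hij hjn
    induction j with
    | zero => omega
    | succ j ih =>
      rcases Nat.lt_succ_iff_lt_or_eq.mp hij with h | h
      · exact (ih h (by omega)).trans (hmono j (by omega))
      · subst h; exact hmono i (by omega)
  have hinj : ∀ i ∈ Finset.range (n+1), ∀ j ∈ Finset.range (n+1), x i = x j → i = j := by
    intro i hi j hj hxy
    simp only [Finset.mem_range] at hi hj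
    by_contra hne
    rcases Nat.lt_or_ge i j with h | h
    · exact absurd hxy (ne_of_lt (hlt i j h (by omega)))
    · have : i ≠ j := hne
      have hji : j < i := lt_of_le_of_ne h (Ne.symm hne)
      exact absurd hxy.symm (ne_of_lt (hlt j i hji (by omega)))
  -- total sum of f over partition points ≤ 1
  set S := (Finset.range (n+1)).filter (fun i => x i ∈ A) with hS
  have hT : ∑ i ∈ Finset.range (n+1), f (x i) ≤ 1 := by
    have hsum : ∑ i ∈ Finset.range (n+1), f (x i) = ∑ i ∈ S, (2:ℝ) ^ (-(Y (x i) + 1 : ℤ)) := by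
      rw [hS, Finset.sum_filter]
      apply Finset.sum_congr rfl
      intro i _
      by_cases h : x i ∈ A
      · simp [h, (hf (x i)).1 h]
      · simp [h, (hf (x i)).2 h]
    rw [hsum]
    have hinjY : ∀ i ∈ S, ∀ j ∈ S, Y (x i) = Y (x j) → i = j := by
      intro i hi j hj h
      rw [hS, Finset.mem_filter] at hi hj
      exact hinj i hi.1 j hj.1 (hY _ hi.2 _ hj.2 h)
    have himg : ∑ i ∈ S, (2:ℝ) ^ (-(Y (x i) + 1 : ℤ)) =
        ∑ k ∈ S.image (fun i => Y (x i)), (2:ℝ) ^ (-(k + 1 : ℤ)) := by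
      rw [Finset.sum_image hinjY]
    rw [himg]
    exact geom_tail_le_one _
  -- bound each term and conclude
  calc ∑ i ∈ Finset.range n, |f (x (i + 1)) - f (x i)|
      ≤ ∑ i ∈ Finset.range n, (f (x (i + 1)) + f (x i)) := by
        apply Finset.sum_le_sum
        intro i _
        have := abs_sub (f (x (i + 1))) (f (x i))
        rw [abs_of_nonneg (hfnn _), abs_of_nonneg (hfnn _)] at this
        exact this
    _ = ∑ i ∈ Finset.range n, f (x (i + 1)) + ∑ i ∈ Finset.range n, f (x i) :=
        Finset.sum_add_distrib
    _ ≤ ∑ i ∈ Finset.range (n+1), f (x i) + ∑ i ∈ Finset.range (n+1), f (x i) := by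
        have h1 : ∑ i ∈ Finset.range n, f (x (i + 1)) ≤
            ∑ i ∈ Finset.range (n+1), f (x i) := by
          calc ∑ i ∈ Finset.range n, f (x (i + 1))
              = ∑ i ∈ Finset.Ico 1 (n+1), f (x i) := by
                rw [Finset.sum_Ico_eq_sum_range]; simp [add_comm]
            _ ≤ ∑ i ∈ Finset.range (n+1), f (x i) := by
                apply Finset.sum_le_sum_of_subset_of_nonneg
                · intro i hi; simp only [Finset.mem_Ico] at hi; simp only [Finset.mem_range]; omega
                · intro i _ _; exact hfnn _
        have h2 : ∑ i ∈ Finset.range n, f (x i) ≤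
            ∑ i ∈ Finset.range (n+1), f (x i) :=
          Finset.sum_le_sum_of_subset_of_nonneg
            (Finset.range_subset_range.mpr (by omega)) (fun i _ _ => hfnn _)
        exact add_le_add h1 h2
    _ ≤ 1 + 1 := by linarith
    _ = 2 := by norm_num
end

section
/- Let A ⊆ [0,1] and Y : [0,1] → ℕ be bijective from A onto ℕ. Then the function f(x) = 2^{−(Y(x)+1)} for x ∈ A and f(x) = 0 otherwise has total variation on [0,1] that is finite (the supremum over partitions of ∑|f(x_{i+1}) − f(x_i)| exists and equals at most 2). -/
open Set Finset

lemma geom_finset_sum_le_one (u : Finset ℕ) :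
    ∑ n ∈ u, (2:ℝ) ^ (-(n + 1 : ℤ)) ≤ 1 := by
  have heq : (fun n : ℕ => (2:ℝ) ^ (-(n + 1 : ℤ))) = fun n : ℕ => (1/2:ℝ) ^ n * (1/2) := by
    funext n
    have h1 : (-(n + 1 : ℤ)) = -((n + 1 : ℕ) : ℤ) := by push_cast; ring
    rw [h1, zpow_neg, zpow_natCast, pow_succ]
    rw [mul_inv, one_div, inv_pow]
  have hs : Summable (fun n : ℕ => (2:ℝ) ^ (-(n + 1 : ℤ))) := by
    rw [heq]
    exact (summable_geometric_of_lt_one (by norm_num) (by norm_num)).mul_right _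
  have htsum : ∑' n : ℕ, (2:ℝ) ^ (-(n + 1 : ℤ)) = 1 := by
    rw [heq, tsum_mul_right, tsum_geometric_of_lt_one (by norm_num) (by norm_num)]
    norm_num
  calc ∑ n ∈ u, (2:ℝ) ^ (-(n + 1 : ℤ)) ≤ ∑' n : ℕ, (2:ℝ) ^ (-(n + 1 : ℤ)) :=
        Summable.sum_le_tsum u (fun n _ => by positivity) hs
    _ = 1 := htsum

theorem bijective_indicator_total_variation_le_two
    (A : Set ℝ) (hA : A ⊆ Icc (0:ℝ) 1)
    (Y : ℝ → ℕ)
    (hYinj : ∀ x ∈ A, ∀ y ∈ A, Y x = Y y → x = y)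
    (hYsurj : ∀ n : ℕ, ∃ x ∈ A, Y x = n)
    (f : ℝ → ℝ)
    (hf : ∀ x, (x ∈ A → f x = (2:ℝ) ^ (-(Y x + 1 : ℤ))) ∧ (x ∉ A → f x = 0))
    (V : Set ℝ)
    (hV : V = {s : ℝ | ∃ (n : ℕ) (x : ℕ → ℝ), x 0 = 0 ∧ x n = 1 ∧
      (∀ i < n, x i < x (i + 1)) ∧
      s = ∑ i ∈ Finset.range n, |f (x (i + 1)) - f (x i)|}) :
    BddAbove V ∧ sSup V ≤ 2 := by
  have hfnn : ∀ x, 0 ≤ f x := by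
    intro x
    by_cases hx : x ∈ A
    · rw [(hf x).1 hx]; positivity
    · rw [(hf x).2 hx]
  -- any finset sum of f is at most 1
  classical
  have key : ∀ s : Finset ℝ, ∑ x ∈ s, f x ≤ 1 := by
    intro s
    have h1 : ∑ x ∈ s, f x = ∑ x ∈ s.filter (· ∈ A), f x := by
      refine (Finset.sum_filter_of_ne ?_).symm
      intro x _ hx
      by_contra h
      exact hx ((hf x).2 h)
    rw [h1]
    set t := s.filter (· ∈ A) with ht
    have hmem : ∀ x ∈ t, x ∈ A := fun x hx => (Finset.mem_filter.mp hx).2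
    have h2 : ∑ x ∈ t, f x = ∑ n ∈ t.image Y, (2:ℝ) ^ (-(n + 1 : ℤ)) := by
      rw [Finset.sum_image (fun x hx y hy h => hYinj x (hmem x hx) y (hmem y hy) h)]
      exact Finset.sum_congr rfl (fun x hx => (hf x).1 (hmem x hx))
    rw [h2]
    exact geom_finset_sum_le_one _
  have bound : ∀ s ∈ V, s ≤ 2 := by
    intro s hs
    rw [hV] at hs
    obtain ⟨n, x, hx0, hxn, hstep, hsum⟩ := hs
    -- strict monotonicity
    have hmono : ∀ j i, i < j → j ≤ n → x i < x j := by
      intro j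
      induction j with
      | zero => intro i hi _; omega
      | succ k ih =>
        intro i hi hj
        rcases Nat.lt_or_ge i k with h | h
        · exact lt_trans (ih i h (by omega)) (hstep k (by omega))
        · have : i = k := by omega
          subst this
          exact hstep i (by omega)
    have hinj1 : ∀ i ∈ Finset.range n, ∀ j ∈ Finset.range n,
        x (i + 1) = x (j + 1) → i = j := by
      intro i hi j hj h
      by_contra hne
      rcases Nat.lt_or_ge i j with hlt | hge
      · exact absurd h (ne_of_lt (hmono (j+1) (i+1) (by omega) (by simp at hj; omega)))
      · exact absurd h.symm (ne_of_lt (hmono (i+1) (j+1) (by omega) (by simp at hi; omega)))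
    have hinj2 : ∀ i ∈ Finset.range n, ∀ j ∈ Finset.range n, x i = x j → i = j := by
      intro i hi j hj h
      by_contra hne
      rcases Nat.lt_or_ge i j with hlt | hge
      · exact absurd h (ne_of_lt (hmono j i hlt (by simp at hj; omega)))
      · exact absurd h.symm (ne_of_lt (hmono i j (by omega) (by simp at hi; omega)))
    have h1 : ∑ i ∈ Finset.range n, f (x (i + 1)) ≤ 1 := by
      rw [← Finset.sum_image hinj1]
      exact key _
    have h2 : ∑ i ∈ Finset.range n, f (x i) ≤ 1 := by
      rw [← Finset.sum_image hinj2]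
      exact key _
    calc s = ∑ i ∈ Finset.range n, |f (x (i + 1)) - f (x i)| := hsum
      _ ≤ ∑ i ∈ Finset.range n, (f (x (i + 1)) + f (x i)) := by
          refine Finset.sum_le_sum (fun i _ => ?_)
          have := abs_sub (f (x (i + 1))) (f (x i))
          calc |f (x (i + 1)) - f (x i)| ≤ |f (x (i + 1))| + |f (x i)| := abs_sub _ _
            _ = f (x (i + 1)) + f (x i) := by
                rw [abs_of_nonneg (hfnn _), abs_of_nonneg (hfnn _)]
      _ = (∑ i ∈ Finset.range n, f (x (i + 1))) + ∑ i ∈ Finset.range n, f (x i) :=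
          Finset.sum_add_distrib
      _ ≤ 1 + 1 := add_le_add h1 h2
      _ = 2 := by norm_num
  exact ⟨⟨2, bound⟩, Real.sSup_le bound (by norm_num)⟩
end

section
/- Let A ⊆ [0,1], Y : [0,1] → ℕ injective on A, and f(x) = 2^{−(Y(x)+1)} for x ∈ A, f(x) = 0 otherwise. Then f is Riemann integrable on [0,1] and ∫₀¹ f(x) dx = 0. -/
open Set Finset

theorem injective_indicator_riemann_integral_zero
    (A : Set ℝ) (hA : A ⊆ Icc (0:ℝ) 1)
    (Y : ℝ → ℕ) (hY : ∀ x ∈ A, ∀ y ∈ A, Y x = Y y → x = y)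
    (f : ℝ → ℝ)
    (hf : ∀ x, (x ∈ A → f x = (2:ℝ) ^ (-(Y x + 1 : ℤ))) ∧ (x ∉ A → f x = 0)) :
    ∀ ε > (0:ℝ), ∃ δ > (0:ℝ), ∀ (n : ℕ) (x t : ℕ → ℝ),
      x 0 = 0 → x n = 1 → (∀ i < n, x i < x (i + 1)) →
      (∀ i < n, t i ∈ Icc (x i) (x (i + 1))) →
      (∀ i < n, x (i + 1) - x i ≤ δ) →
      |∑ i ∈ Finset.range n, f (t i) * (x (i + 1) - x i)| < ε := by
  intro ε hε
  obtain ⟨N, hN⟩ := exists_pow_lt_of_lt_one (half_pos hε) (by norm_num : (1:ℝ)/2 < 1)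
  have hδpos : (0:ℝ) < ε / (4*N+4) := by positivity
  refine ⟨ε / (4*N+4), hδpos, ?_⟩
  intro n x t hx0 hxn hmono htag hmesh
  classical
  set δ : ℝ := ε / (4*N+4) with hδ
  -- f is nonnegative and bounded by 1
  have hfnn : ∀ y, 0 ≤ f y := by
    intro y
    by_cases hy : y ∈ A
    · rw [(hf y).1 hy]; positivity
    · rw [(hf y).2 hy]
  have hfle : ∀ y, f y ≤ 1 := by
    intro y
    by_cases hy : y ∈ A
    · rw [(hf y).1 hy]
      calc (2:ℝ) ^ (-(Y y + 1:ℤ)) ≤ (2:ℝ) ^ (0:ℤ) := by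
            apply zpow_le_zpow_right₀ (by norm_num) (by omega)
        _ = 1 := by norm_num
    · rw [(hf y).2 hy]; norm_num
  -- monotonicity of x
  have hxle : ∀ i j, i ≤ j → j ≤ n → x i ≤ x j := by
    intro i j hij
    induction j, hij using Nat.le_induction with
    | base => intro _; exact le_rfl
    | succ k hk ih =>
      intro hkn
      exact (ih (by omega)).trans (le_of_lt (hmono k (by omega)))
  have hxlt : ∀ i j, i < j → j ≤ n → x i < x j := by
    intro i j hij hjn
    exact lt_of_lt_of_le (hmono i (by omega)) (hxle (i+1) j (by omega) hjn)
  have hΔnn : ∀ i < n, 0 ≤ x (i+1) - x i := fun i hi => le_of_lt (sub_pos.mpr (hmono i hi))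
  -- a real can be a tag of at most two adjacent intervals
  have hkey : ∀ i j, i < n → j < n → t i = t j → i < j → j = i + 1 := by
    intro i j hi hj htij hij
    by_contra h
    have h2 : i + 1 < j := by omega
    have : t i < t j :=
      calc t i ≤ x (i+1) := (htag i hi).2
        _ < x j := hxlt (i+1) j h2 (le_of_lt hj)
        _ ≤ t j := (htag j hj).1
    linarith [this, le_of_eq htij]
  set S := (Finset.range n).filter (fun i => t i ∈ A ∧ Y (t i) < N) with hSdef
  have hcard : (S.card : ℝ) ≤ 2 * N := by
    have hc : S.card ≤ ((Finset.range N) ×ˢ (Finset.range 2)).card := by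
      apply Finset.card_le_card_of_injOn (fun i => (Y (t i), i % 2))
      · intro i hi
        simp only [hSdef, Finset.mem_coe, Finset.mem_filter, Finset.mem_range] at hi
        simp only [Finset.mem_coe, Finset.mem_product, Finset.mem_range]
        exact ⟨hi.2.2, Nat.mod_lt _ (by norm_num)⟩
      · intro i hi j hj heq
        simp only [hSdef, Finset.coe_filter, Set.mem_setOf_eq, Finset.mem_range] at hi hj
        simp only [Prod.mk.injEq] at heq
        have htij : t i = t j := hY _ hi.2.1 _ hj.2.1 heq.1
        rcases lt_trichotomy i j with h | h | h
        · have := hkey i j hi.1 hj.1 htij h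
          omega
        · exact h
        · have := hkey j i hj.1 hi.1 htij.symm h
          omega
    have : ((Finset.range N) ×ˢ (Finset.range 2)).card = N * 2 := by
      simp [Finset.card_product]
    rw [this] at hc
    have : (S.card : ℝ) ≤ (N * 2 : ℕ) := by exact_mod_cast hc
    push_cast at this
    linarith
  -- split the sum
  have hsplit := Finset.sum_filter_add_sum_filter_not (Finset.range n)
    (fun i => t i ∈ A ∧ Y (t i) < N) (fun i => f (t i) * (x (i+1) - x i))
  -- bound on big part
  have hbig : ∑ i ∈ S, f (t i) * (x (i+1) - x i) ≤ ε / 2 := by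
    have h1 : ∑ i ∈ S, f (t i) * (x (i+1) - x i) ≤ S.card • δ := by
      apply Finset.sum_le_card_nsmul
      intro i hi
      simp only [hSdef, Finset.mem_filter, Finset.mem_range] at hi
      calc f (t i) * (x (i+1) - x i) ≤ 1 * δ :=
            mul_le_mul (hfle _) (hmesh i hi.1) (hΔnn i hi.1) zero_le_one
        _ = δ := one_mul δ
    have h2 : (S.card : ℝ) * δ ≤ 2 * N * δ := by
      apply mul_le_mul_of_nonneg_right hcard (le_of_lt hδpos)
    rw [nsmul_eq_mul] at h1
    have h3 : 2 * (N:ℝ) * δ ≤ ε / 2 := by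
      rw [hδ, ← mul_div_assoc,
        div_le_div_iff₀ (by positivity) (by norm_num : (0:ℝ) < 2)]
      nlinarith [hε, Nat.cast_nonneg (α := ℝ) N]
    linarith
  -- bound on small part
  have hTsub : (Finset.range n).filter (fun i => ¬(t i ∈ A ∧ Y (t i) < N)) ⊆ Finset.range n :=
    Finset.filter_subset _ _
  have hsmall : ∑ i ∈ (Finset.range n).filter (fun i => ¬(t i ∈ A ∧ Y (t i) < N)),
      f (t i) * (x (i+1) - x i) < ε / 2 := by
    have hbnd : ∀ i ∈ (Finset.range n).filter (fun i => ¬(t i ∈ A ∧ Y (t i) < N)),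
        f (t i) * (x (i+1) - x i) ≤ ((1:ℝ)/2)^N * (x (i+1) - x i) := by
      intro i hi
      simp only [Finset.mem_filter, Finset.mem_range, not_and, not_lt] at hi
      have hfb : f (t i) ≤ ((1:ℝ)/2)^N := by
        by_cases hti : t i ∈ A
        · have hYN := hi.2 hti
          rw [(hf (t i)).1 hti]
          have : ((1:ℝ)/2)^N = (2:ℝ) ^ (-(N:ℤ)) := by
            rw [one_div, inv_pow, ← zpow_natCast, ← zpow_neg]
          rw [this]
          apply zpow_le_zpow_right₀ (by norm_num) (by omega)
        · rw [(hf (t i)).2 hti]; positivity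
      exact mul_le_mul_of_nonneg_right hfb (hΔnn i hi.1)
    have h1 := Finset.sum_le_sum hbnd
    have h2 : ∑ i ∈ (Finset.range n).filter (fun i => ¬(t i ∈ A ∧ Y (t i) < N)),
        ((1:ℝ)/2)^N * (x (i+1) - x i)
        ≤ ∑ i ∈ Finset.range n, ((1:ℝ)/2)^N * (x (i+1) - x i) := by
      apply Finset.sum_le_sum_of_subset_of_nonneg hTsub
      intro i hi _
      have hin : i < n := Finset.mem_range.mp hi
      exact mul_nonneg (by positivity) (hΔnn i hin)
    have h3 : ∑ i ∈ Finset.range n, ((1:ℝ)/2)^N * (x (i+1) - x i) = ((1:ℝ)/2)^N := by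
      rw [← Finset.mul_sum, Finset.sum_range_sub (fun i => x i), hxn, hx0]
      ring
    calc ∑ i ∈ (Finset.range n).filter (fun i => ¬(t i ∈ A ∧ Y (t i) < N)),
          f (t i) * (x (i+1) - x i) ≤ ((1:ℝ)/2)^N := by rw [← h3]; exact h1.trans h2
      _ < ε / 2 := hN
  -- combine
  have habs : |∑ i ∈ Finset.range n, f (t i) * (x (i + 1) - x i)|
      = ∑ i ∈ Finset.range n, f (t i) * (x (i + 1) - x i) := by
    apply abs_of_nonneg
    apply Finset.sum_nonneg
    intro i hi
    exact mul_nonneg (hfnn _) (hΔnn i (Finset.mem_range.mp hi))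
  rw [habs, ← hsplit]
  calc (∑ i ∈ S, f (t i) * (x (i+1) - x i)) +
        ∑ i ∈ (Finset.range n).filter (fun i => ¬(t i ∈ A ∧ Y (t i) < N)),
          f (t i) * (x (i+1) - x i)
      < ε / 2 + ε / 2 := by
        exact add_lt_add_of_le_of_lt hbig hsmall
    _ = ε := by ring
end

section
/- Let f : ℝ → ℝ be defined by f(x) = 2^{−(Y(x)+1)} for x ∈ A and f(x) = 0 otherwise, where A ⊆ ℝ and Y : ℝ → ℕ is injective on A. Then for every s ≥ 0 and N ∈ ℕ, ∫₀ᴺ e^{−st} f(t) dt = 0; hence the Laplace transform of f exists and is identically zero on [0,∞). -/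
open Set Finset

lemma aux_mono (n : ℕ) (x : ℕ → ℝ) (hx : ∀ i < n, x i < x (i+1)) :
    ∀ a b, a < b → b ≤ n → x a < x b := by
  intro a b hab hbn
  induction b with
  | zero => omega
  | succ b ih =>
    rcases Nat.lt_succ_iff_lt_or_eq.mp hab with h | h
    · exact (ih h (by omega)).trans (hx b (by omega))
    · subst h; exact hx a (by omega)

lemma aux_geo (S : Finset ℕ) (g : ℕ → ℕ) (hg : Set.InjOn g S) :
    ∑ i ∈ S, (2:ℝ) ^ (-(g i + 1 : ℤ)) ≤ 1 := by
  have h1 : ∀ i : ℕ, (2:ℝ) ^ (-(i + 1 : ℤ)) = (1/2:ℝ)^(i + 1) := by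
    intro i
    rw [one_div, inv_pow, ← zpow_natCast, ← zpow_neg]
    norm_num
  have hsum : Summable (fun k : ℕ => (1/2:ℝ)^(k+1)) := by
    have h := (summable_geometric_of_lt_one (r:=(1/2:ℝ)) (by norm_num) (by norm_num)).mul_right (1/2)
    have he : (fun k : ℕ => (1/2:ℝ)^(k+1)) = fun k => (1/2:ℝ)^k * (1/2) := by
      funext k; rw [pow_succ]
    rw [he]; exact h
  calc ∑ i ∈ S, (2:ℝ) ^ (-(g i + 1 : ℤ))
      = ∑ i ∈ S, (1/2:ℝ)^(g i + 1) := Finset.sum_congr rfl fun i _ => h1 (g i)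
    _ = ∑ k ∈ S.image g, (1/2:ℝ)^(k+1) :=
        (Finset.sum_image (f := fun k => (1/2:ℝ)^(k+1)) (fun a ha b hb h => hg ha hb h)).symm
    _ ≤ ∑' k : ℕ, (1/2:ℝ)^(k+1) :=
        Summable.sum_le_tsum _ (fun k _ => by positivity) hsum
    _ = 1 := by
        have h2 : ∑' k : ℕ, (1/2:ℝ)^(k+1) = (∑' k : ℕ, (1/2:ℝ)^k) * (1/2) := by
          rw [← tsum_mul_right]; exact tsum_congr fun k => (pow_succ _ _)
        rw [h2, tsum_geometric_of_lt_one (by norm_num) (by norm_num)]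
        norm_num

theorem laplace_transform_of_injective_indicator_zero
    (A : Set ℝ)
    (Y : ℝ → ℕ) (hY : ∀ x ∈ A, ∀ y ∈ A, Y x = Y y → x = y)
    (f : ℝ → ℝ)
    (hf : ∀ x, (x ∈ A → f x = (2:ℝ) ^ (-(Y x + 1 : ℤ))) ∧ (x ∉ A → f x = 0)) :
    ∀ s : ℝ, 0 ≤ s → ∀ N : ℕ,
      ∀ ε > (0:ℝ), ∃ δ > (0:ℝ), ∀ (n : ℕ) (x t : ℕ → ℝ),
        x 0 = 0 → x n = (N : ℝ) → (∀ i < n, x i < x (i + 1)) →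
        (∀ i < n, t i ∈ Icc (x i) (x (i + 1))) →
        (∀ i < n, x (i + 1) - x i ≤ δ) →
        |∑ i ∈ Finset.range n, Real.exp (-s * t i) * f (t i) * (x (i + 1) - x i)| < ε := by
  classical
  intro s hs N ε hε
  refine ⟨ε/3, by positivity, ?_⟩
  intro n x t hx0 hxn hmono ht hδ
  have hxm : ∀ a b, a < b → b ≤ n → x a < x b := aux_mono n x hmono
  have hxnn : ∀ i ≤ n, 0 ≤ x i := by
    intro i hi
    rcases Nat.eq_zero_or_pos i with h | h
    · simp [h, hx0]
    · exact le_of_lt (hx0 ▸ hxm 0 i h hi)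
  have htnn : ∀ i < n, 0 ≤ t i := fun i hi =>
    le_trans (hxnn i (le_of_lt hi)) (ht i hi).1
  have hfnn : ∀ y, 0 ≤ f y := by
    intro y
    by_cases hy : y ∈ A
    · rw [(hf y).1 hy]; positivity
    · rw [(hf y).2 hy]
  have key : ∀ F : Finset ℕ, F ⊆ Finset.range n →
      (∀ i ∈ F, ∀ j ∈ F, i < j → i + 1 < j) →
      ∑ i ∈ F, f (t i) ≤ 1 := by
    intro F hFn hspread
    have hstrict : ∀ i ∈ F, ∀ j ∈ F, i < j → t i < t j := by
      intro i hi j hj hij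
      have hin : i < n := Finset.mem_range.mp (hFn hi)
      have hjn : j < n := Finset.mem_range.mp (hFn hj)
      have h1 : t i ≤ x (i+1) := (ht i hin).2
      have h2 : x (i+1) < x j := hxm (i+1) j (hspread i hi j hj hij) (le_of_lt hjn)
      have h3 : x j ≤ t j := (ht j hjn).1
      linarith
    set S := F.filter (fun i => t i ∈ A) with hS
    have hsum_eq : ∑ i ∈ F, f (t i) = ∑ i ∈ S, f (t i) := by
      rw [hS, Finset.sum_filter_of_ne]
      intro i _ hne
      by_contra hA
      exact hne ((hf (t i)).2 hA)
    rw [hsum_eq]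
    have heq : ∑ i ∈ S, f (t i) = ∑ i ∈ S, (2:ℝ) ^ (-((Y ∘ t) i + 1 : ℤ)) := by
      refine Finset.sum_congr rfl fun i hi => ?_
      have : t i ∈ A := (Finset.mem_filter.mp hi).2
      simp [(hf (t i)).1 this, Function.comp]
    rw [heq]
    apply aux_geo
    intro i hi j hj hij
    simp only [hS, Finset.coe_filter, Set.mem_setOf_eq] at hi hj
    by_contra hne
    have hti : t i ∈ A := hi.2
    have htj : t j ∈ A := hj.2
    have heqt : t i = t j := hY _ hti _ htj hij
    have hiF : i ∈ F := hi.1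
    have hjF : j ∈ F := hj.1
    have hiS : i ∈ S := Finset.mem_filter.mpr ⟨hiF, hti⟩
    have hjS : j ∈ S := Finset.mem_filter.mpr ⟨hjF, htj⟩
    rcases Nat.lt_or_ge i j with h | h
    · have := hstrict i hiF j hjF h
      linarith
    · have hji : j < i := by omega
      have := hstrict j hjF i hiF hji
      linarith
  have term_le : ∀ i ∈ Finset.range n,
      Real.exp (-s * t i) * f (t i) * (x (i+1) - x i) ≤ f (t i) * (ε/3) := by
    intro i hi
    have hin : i < n := Finset.mem_range.mp hi
    have hexp : Real.exp (-s * t i) ≤ 1 := by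
      rw [Real.exp_le_one_iff]
      have := htnn i hin
      nlinarith
    have hΔ0 : 0 ≤ x (i+1) - x i := by linarith [hmono i hin]
    have hΔ : x (i+1) - x i ≤ ε/3 := hδ i hin
    calc Real.exp (-s * t i) * f (t i) * (x (i+1) - x i)
        ≤ 1 * f (t i) * (x (i+1) - x i) := by
          apply mul_le_mul_of_nonneg_right _ hΔ0
          exact mul_le_mul_of_nonneg_right hexp (hfnn _)
      _ = f (t i) * (x (i+1) - x i) := by ring
      _ ≤ f (t i) * (ε/3) := mul_le_mul_of_nonneg_left hΔ (hfnn _)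
  have hnonneg : ∀ i ∈ Finset.range n,
      0 ≤ Real.exp (-s * t i) * f (t i) * (x (i+1) - x i) := by
    intro i hi
    have hin : i < n := Finset.mem_range.mp hi
    have hΔ0 : 0 ≤ x (i+1) - x i := by linarith [hmono i hin]
    have h1 := Real.exp_pos (-s * t i)
    have h2 := hfnn (t i)
    positivity
  rw [abs_of_nonneg (Finset.sum_nonneg hnonneg)]
  have step1 : ∑ i ∈ Finset.range n, Real.exp (-s * t i) * f (t i) * (x (i+1) - x i)
      ≤ ∑ i ∈ Finset.range n, f (t i) * (ε/3) := Finset.sum_le_sum term_le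
  have split : ∑ i ∈ Finset.range n, f (t i)
      = ∑ i ∈ (Finset.range n).filter (fun i => Even i), f (t i)
      + ∑ i ∈ (Finset.range n).filter (fun i => ¬ Even i), f (t i) :=
    (Finset.sum_filter_add_sum_filter_not _ _ _).symm
  have h_even : ∑ i ∈ (Finset.range n).filter (fun i => Even i), f (t i) ≤ 1 := by
    apply key _ (Finset.filter_subset _ _)
    intro i hi j hj hij
    have h1 := (Finset.mem_filter.mp hi).2
    have h2 := (Finset.mem_filter.mp hj).2
    rw [Nat.even_iff] at h1 h2
    omega
  have h_odd : ∑ i ∈ (Finset.range n).filter (fun i => ¬ Even i), f (t i) ≤ 1 := by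
    apply key _ (Finset.filter_subset _ _)
    intro i hi j hj hij
    have h1 := (Finset.mem_filter.mp hi).2
    have h2 := (Finset.mem_filter.mp hj).2
    rw [Nat.even_iff] at h1 h2
    omega
  have hsum2 : ∑ i ∈ Finset.range n, f (t i) ≤ 2 := by
    rw [split]; linarith
  calc ∑ i ∈ Finset.range n, Real.exp (-s * t i) * f (t i) * (x (i+1) - x i)
      ≤ ∑ i ∈ Finset.range n, f (t i) * (ε/3) := step1
    _ = (∑ i ∈ Finset.range n, f (t i)) * (ε/3) := by rw [← Finset.sum_mul]
    _ ≤ 2 * (ε/3) := mul_le_mul_of_nonneg_right hsum2 (by positivity)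
    _ < ε := by linarith
end
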